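/- Let R be a commutative ring and A = [[a,b],[c,d]] ∈ M₂(R). A is extendable (embeds as upper-left 2×2 block of some 3×3 matrix of determinant 1) if and only if there exists (x,y,z,w,v) ∈ R⁵ such that axw + bxz + cyw + dyz + (ad − bc)v = 1. -/
import Mathlib

open Matrix

theorem stmt7 {R : Type*} [CommRing R] (a b c d : R) :
    (∃ x y z w v : R, (!![a, b, y; c, d, -x; -z, w, v] : Matrix (Fin 3) (Fin 3) R).det = 1) ↔
      ∃ x y z w v : R,
        a * x * w + b * x * z + c * y * w + d * y * z + (a * d - b * c) * v = 1 := by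
  constructor <;> rintro ⟨x, y, z, w, v, h⟩ <;> refine ⟨x, y, z, w, v, ?_⟩ <;>
    simp [Matrix.det_fin_three] at h ⊢ <;> linear_combination h
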